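/- For every integer n and every real γ: if n ≥ 4 and 0 < γ ≤ 1/2, then Ξ(n,γ) < ((n+2γ)/(n−2γ)) · Q(n,γ); if n ≥ 5 and 0 < γ ≤ 1, then Ξ(n,γ) < ((n+2γ)/(n−2γ)) · Q(n,γ); and if n ≥ 7 and 0 < γ ≤ 2, then Ξ(n,γ) < ((n+2γ)/(n−2γ)) · Q(n,γ). -/
import Mathlib

open Real Filter Finset

/-- `Ξ(n,γ) = 4^γ · Γ(n/4+γ/2−1/4)² / Γ(n/4−γ/2−1/4)²`. -/
noncomputable def Xi (n : ℤ) (γ : ℝ) : ℝ :=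
  (4 : ℝ) ^ γ * Real.Gamma ((n : ℝ) / 4 + γ / 2 - 1 / 4) ^ 2 /
    Real.Gamma ((n : ℝ) / 4 - γ / 2 - 1 / 4) ^ 2

/-- The fractional curvature `Q_γ(n,1)` of the trivial solution on `Sⁿ∖S¹`. -/
noncomputable def Qcurv (n : ℤ) (γ : ℝ) : ℝ :=
  (4 : ℝ) ^ γ * Real.Gamma (((n : ℝ) + 2 * γ) / 4) * Real.Gamma (((n : ℝ) - 2 + 2 * γ) / 4) /
    (Real.Gamma (((n : ℝ) - 2 * γ) / 4) * Real.Gamma (((n : ℝ) - 2 - 2 * γ) / 4))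

/-- Key Gamma inequality, via Euler's limit formula. -/
private lemma key_gamma {x y : ℝ} (hy : (3:ℝ)/4 ≤ y) (hyx : y ≤ x) :
    Real.Gamma y * Real.Gamma (y + 1/2) * (Real.Gamma (x - 1/4) * Real.Gamma (x + 3/4)) ≤
      Real.Gamma x * Real.Gamma (x + 1/2) * (Real.Gamma (y - 1/4) * Real.Gamma (y + 3/4)) := by
  have hx : (3:ℝ)/4 ≤ x := le_trans hy hyx
  refine le_of_tendsto_of_tendsto
    (((Real.GammaSeq_tendsto_Gamma y).mul (Real.GammaSeq_tendsto_Gamma (y + 1/2))).mul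
      ((Real.GammaSeq_tendsto_Gamma (x - 1/4)).mul (Real.GammaSeq_tendsto_Gamma (x + 3/4))))
    (((Real.GammaSeq_tendsto_Gamma x).mul (Real.GammaSeq_tendsto_Gamma (x + 1/2))).mul
      ((Real.GammaSeq_tendsto_Gamma (y - 1/4)).mul (Real.GammaSeq_tendsto_Gamma (y + 3/4)))) ?_
  filter_upwards [eventually_ge_atTop 1] with n hn
  have hn0 : (0:ℝ) < (n : ℝ) := by exact_mod_cast Nat.lt_of_lt_of_le Nat.zero_lt_one hn
  simp only [Real.GammaSeq]
  rw [div_mul_div_comm, div_mul_div_comm, div_mul_div_comm,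
      div_mul_div_comm, div_mul_div_comm, div_mul_div_comm]
  have hpow : (n:ℝ) ^ y * (n:ℝ) ^ (y + 1/2) * ((n:ℝ) ^ (x - 1/4) * (n:ℝ) ^ (x + 3/4)) =
      (n:ℝ) ^ x * (n:ℝ) ^ (x + 1/2) * ((n:ℝ) ^ (y - 1/4) * (n:ℝ) ^ (y + 3/4)) := by
    rw [← Real.rpow_add hn0, ← Real.rpow_add hn0, ← Real.rpow_add hn0,
        ← Real.rpow_add hn0, ← Real.rpow_add hn0, ← Real.rpow_add hn0]
    ring_nf
  have hnum : (n:ℝ) ^ y * (n.factorial : ℝ) * ((n:ℝ) ^ (y + 1/2) * (n.factorial : ℝ)) *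
      ((n:ℝ) ^ (x - 1/4) * (n.factorial : ℝ) * ((n:ℝ) ^ (x + 3/4) * (n.factorial : ℝ))) =
      (n:ℝ) ^ x * (n.factorial : ℝ) * ((n:ℝ) ^ (x + 1/2) * (n.factorial : ℝ)) *
      ((n:ℝ) ^ (y - 1/4) * (n.factorial : ℝ) * ((n:ℝ) ^ (y + 3/4) * (n.factorial : ℝ))) := by
    linear_combination ((n.factorial : ℝ)) ^ 4 * hpow
  rw [hnum]
  have hprodpos : ∀ c : ℝ, 0 < c → 0 < ∏ j ∈ Finset.range (n + 1), (c + (j:ℝ)) := by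
    intro c hc
    exact Finset.prod_pos fun j _ => by positivity
  have hDpos : (0:ℝ) < (∏ j ∈ Finset.range (n + 1), (x + (j:ℝ))) *
      (∏ j ∈ Finset.range (n + 1), (x + 1/2 + (j:ℝ))) *
      ((∏ j ∈ Finset.range (n + 1), (y - 1/4 + (j:ℝ))) *
       (∏ j ∈ Finset.range (n + 1), (y + 3/4 + (j:ℝ)))) :=
    mul_pos (mul_pos (hprodpos x (by linarith)) (hprodpos (x + 1/2) (by linarith)))
      (mul_pos (hprodpos (y - 1/4) (by linarith)) (hprodpos (y + 3/4) (by linarith)))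
  refine div_le_div_of_nonneg_left ?_ hDpos ?_
  · positivity
  · rw [← Finset.prod_mul_distrib, ← Finset.prod_mul_distrib, ← Finset.prod_mul_distrib,
        ← Finset.prod_mul_distrib, ← Finset.prod_mul_distrib, ← Finset.prod_mul_distrib]
    refine Finset.prod_le_prod (fun j _ => ?_) (fun j _ => ?_)
    · have hj : (0:ℝ) ≤ (j : ℝ) := Nat.cast_nonneg j
      have a1 : (0:ℝ) ≤ x + (j:ℝ) := by linarith
      have a2 : (0:ℝ) ≤ x + 1/2 + (j:ℝ) := by linarith
      have a3 : (0:ℝ) ≤ y - 1/4 + (j:ℝ) := by linarith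
      have a4 : (0:ℝ) ≤ y + 3/4 + (j:ℝ) := by linarith
      exact mul_nonneg (mul_nonneg a1 a2) (mul_nonneg a3 a4)
    · have hj : (0:ℝ) ≤ (j : ℝ) := Nat.cast_nonneg j
      nlinarith [mul_nonneg (sub_nonneg.mpr hyx) hj, sq_nonneg (x - y),
        mul_nonneg (sub_nonneg.mpr hyx) (by linarith : (0:ℝ) ≤ y),
        mul_nonneg (mul_nonneg (sub_nonneg.mpr hyx) hj) hj,
        mul_nonneg (sub_nonneg.mpr hyx) (sub_nonneg.mpr hyx)]

/-- Master inequality in product form. -/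
private lemma master {x y : ℝ} (hy : (3:ℝ)/4 ≤ y) (hyx : y < x)
    (hq : (1:ℝ)/8 < (x - 1/2) * (y - 1/2)) :
    Real.Gamma (x - 1/4) ^ 2 * (Real.Gamma y * Real.Gamma (y - 1/2)) * y <
      Real.Gamma (y - 1/4) ^ 2 * (Real.Gamma x * Real.Gamma (x - 1/2)) * x := by
  have hy2 : (0:ℝ) < y - 1/2 := by linarith
  have hy4 : (0:ℝ) < y - 1/4 := by linarith
  have hx2 : (0:ℝ) < x - 1/2 := by linarith
  have hx4 : (0:ℝ) < x - 1/4 := by linarith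
  have hy0 : (0:ℝ) < y := by linarith
  have hx0 : (0:ℝ) < x := by linarith
  have hK := key_gamma hy (le_of_lt hyx)
  rw [show y + 1/2 = (y - 1/2) + 1 by ring, Real.Gamma_add_one (ne_of_gt hy2),
      show x + 3/4 = (x - 1/4) + 1 by ring, Real.Gamma_add_one (ne_of_gt hx4),
      show x + 1/2 = (x - 1/2) + 1 by ring, Real.Gamma_add_one (ne_of_gt hx2),
      show y + 3/4 = (y - 1/4) + 1 by ring, Real.Gamma_add_one (ne_of_gt hy4)] at hK
  have hApos : 0 < Real.Gamma (x - 1/4) ^ 2 * (Real.Gamma y * Real.Gamma (y - 1/2)) := by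
    have h1 := Real.Gamma_pos_of_pos hx4; have h2 := Real.Gamma_pos_of_pos hy0
    have h3 := Real.Gamma_pos_of_pos hy2; positivity
  have hBpos : 0 < Real.Gamma (y - 1/4) ^ 2 * (Real.Gamma x * Real.Gamma (x - 1/2)) := by
    have h1 := Real.Gamma_pos_of_pos hy4; have h2 := Real.Gamma_pos_of_pos hx0
    have h3 := Real.Gamma_pos_of_pos hx2; positivity
  have hK' : Real.Gamma (x - 1/4) ^ 2 * (Real.Gamma y * Real.Gamma (y - 1/2)) *
        ((y - 1/2) * (x - 1/4)) ≤
      Real.Gamma (y - 1/4) ^ 2 * (Real.Gamma x * Real.Gamma (x - 1/2)) *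
        ((x - 1/2) * (y - 1/4)) := by nlinarith [hK]
  have hpoly : y * ((x - 1/2) * (y - 1/4)) < x * ((y - 1/2) * (x - 1/4)) := by
    nlinarith [mul_pos (sub_pos.mpr hyx) (by linarith : (0:ℝ) < (x - 1/2) * (y - 1/2) - 1/8)]
  have hc : (0:ℝ) < (y - 1/2) * (x - 1/4) := mul_pos hy2 hx4
  set A := Real.Gamma (x - 1/4) ^ 2 * (Real.Gamma y * Real.Gamma (y - 1/2))
  set B := Real.Gamma (y - 1/4) ^ 2 * (Real.Gamma x * Real.Gamma (x - 1/2))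
  have step : A * y * ((y - 1/2) * (x - 1/4)) < B * x * ((y - 1/2) * (x - 1/4)) :=
    calc A * y * ((y - 1/2) * (x - 1/4)) = A * ((y - 1/2) * (x - 1/4)) * y := by ring
    _ ≤ B * ((x - 1/2) * (y - 1/4)) * y := mul_le_mul_of_nonneg_right hK' (le_of_lt hy0)
    _ = B * (y * ((x - 1/2) * (y - 1/4))) := by ring
    _ < B * (x * ((y - 1/2) * (x - 1/4))) := mul_lt_mul_of_pos_left hpoly hBpos
    _ = B * x * ((y - 1/2) * (x - 1/4)) := by ring
  exact lt_of_mul_lt_mul_right step (le_of_lt hc)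

private lemma final (n : ℤ) (γ : ℝ) (h1 : 0 < γ) (h2 : (3:ℝ)/4 ≤ (n:ℝ)/4 - γ/2)
    (h3 : (1:ℝ)/8 < ((n:ℝ)/4 + γ/2 - 1/2) * ((n:ℝ)/4 - γ/2 - 1/2)) :
    Xi n γ < (((n : ℝ) + 2 * γ) / ((n : ℝ) - 2 * γ)) * Qcurv n γ := by
  obtain ⟨x, hxdef⟩ : ∃ x : ℝ, x = (n:ℝ)/4 + γ/2 := ⟨_, rfl⟩
  obtain ⟨y, hydef⟩ : ∃ y : ℝ, y = (n:ℝ)/4 - γ/2 := ⟨_, rfl⟩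
  rw [← hydef] at h2
  rw [← hxdef, ← hydef] at h3
  have hy : (3:ℝ)/4 ≤ y := h2
  have hyx : y < x := by rw [hxdef, hydef]; linarith
  have hy2 : (0:ℝ) < y - 1/2 := by linarith
  have hy4 : (0:ℝ) < y - 1/4 := by linarith
  have hx2 : (0:ℝ) < x - 1/2 := by linarith
  have hx4 : (0:ℝ) < x - 1/4 := by linarith
  have hy0 : (0:ℝ) < y := by linarith
  have hx0 : (0:ℝ) < x := by linarith
  have hXi : Xi n γ = (4:ℝ) ^ γ * Real.Gamma (x - 1/4) ^ 2 / Real.Gamma (y - 1/4) ^ 2 := by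
    unfold Xi
    rw [show (n:ℝ)/4 + γ/2 - 1/4 = x - 1/4 by rw [hxdef],
        show (n:ℝ)/4 - γ/2 - 1/4 = y - 1/4 by rw [hydef]]
  have hQ : Qcurv n γ = (4:ℝ) ^ γ * Real.Gamma x * Real.Gamma (x - 1/2) /
      (Real.Gamma y * Real.Gamma (y - 1/2)) := by
    unfold Qcurv
    rw [show ((n:ℝ) + 2 * γ)/4 = x by rw [hxdef]; ring,
        show ((n:ℝ) - 2 + 2 * γ)/4 = x - 1/2 by rw [hxdef]; ring,
        show ((n:ℝ) - 2 * γ)/4 = y by rw [hydef]; ring,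
        show ((n:ℝ) - 2 - 2 * γ)/4 = y - 1/2 by rw [hydef]; ring]
  have hfrac : ((n : ℝ) + 2 * γ) / ((n : ℝ) - 2 * γ) = x / y := by
    rw [show (n:ℝ) + 2 * γ = 4 * x by rw [hxdef]; ring,
        show (n:ℝ) - 2 * γ = 4 * y by rw [hydef]; ring,
        mul_div_mul_left _ _ (by norm_num : (4:ℝ) ≠ 0)]
  rw [hXi, hQ, hfrac]
  have hm := master hy hyx h3
  have hP : (0:ℝ) < (4:ℝ) ^ γ := Real.rpow_pos_of_pos (by norm_num) γ
  have hG1 : 0 < Real.Gamma (x - 1/4) := Real.Gamma_pos_of_pos hx4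
  have hG2 : 0 < Real.Gamma (y - 1/4) := Real.Gamma_pos_of_pos hy4
  have hG3 : 0 < Real.Gamma x := Real.Gamma_pos_of_pos hx0
  have hG4 : 0 < Real.Gamma (x - 1/2) := Real.Gamma_pos_of_pos hx2
  have hG5 : 0 < Real.Gamma y := Real.Gamma_pos_of_pos hy0
  have hG6 : 0 < Real.Gamma (y - 1/2) := Real.Gamma_pos_of_pos hy2
  rw [div_mul_div_comm, div_lt_div_iff₀ (by positivity) (by positivity)]
  nlinarith [mul_lt_mul_of_pos_left hm hP]

theorem stmt17 (n : ℤ) (γ : ℝ) :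
    (4 ≤ n → 0 < γ → γ ≤ 1 / 2 →
      Xi n γ < (((n : ℝ) + 2 * γ) / ((n : ℝ) - 2 * γ)) * Qcurv n γ) ∧
    (5 ≤ n → 0 < γ → γ ≤ 1 →
      Xi n γ < (((n : ℝ) + 2 * γ) / ((n : ℝ) - 2 * γ)) * Qcurv n γ) ∧
    (7 ≤ n → 0 < γ → γ ≤ 2 →
      Xi n γ < (((n : ℝ) + 2 * γ) / ((n : ℝ) - 2 * γ)) * Qcurv n γ) := by
  refine ⟨fun hn hg hg' => ?_, fun hn hg hg' => ?_, fun hn hg hg' => ?_⟩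
  · have hn' : (4:ℝ) ≤ (n:ℝ) := by exact_mod_cast hn
    refine final n γ hg (by linarith) ?_
    nlinarith [mul_nonneg (by linarith : (0:ℝ) ≤ (n:ℝ)/4 - 1) (by linarith : (0:ℝ) ≤ (n:ℝ)/4),
      mul_nonneg (by linarith : (0:ℝ) ≤ 1/2 - γ) (by linarith : (0:ℝ) ≤ 1/2 + γ)]
  · have hn' : (5:ℝ) ≤ (n:ℝ) := by exact_mod_cast hn
    refine final n γ hg (by linarith) ?_
    nlinarith [mul_nonneg (by linarith : (0:ℝ) ≤ (n:ℝ)/4 - 5/4) (by linarith : (0:ℝ) ≤ (n:ℝ)/4 + 1/4),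
      mul_nonneg (by linarith : (0:ℝ) ≤ 1 - γ) (by linarith : (0:ℝ) ≤ 1 + γ)]
  · have hn' : (7:ℝ) ≤ (n:ℝ) := by exact_mod_cast hn
    refine final n γ hg (by linarith) ?_
    nlinarith [mul_nonneg (by linarith : (0:ℝ) ≤ (n:ℝ)/4 - 7/4) (by linarith : (0:ℝ) ≤ (n:ℝ)/4 + 3/4),
      mul_nonneg (by linarith : (0:ℝ) ≤ 2 - γ) (by linarith : (0:ℝ) ≤ 2 + γ)]
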